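/- Let p be prime, q = p^r with r ≥ 1, d ≥ 1. For each a ∈ F_q, define f_a = X^{q^d - 1} + X^{q^{d-1}-1} + ... + X^{q-1} + 1 if a = 0, and f_a = X^{q^d} + ... + X^q + X + a otherwise. Then each f_a divides X^{q^{d+1}-1} - 1 in F_q[X], hence the associated linearized polynomial L_{f_a} splits completely over F_{p^n} with n = q^{d+1} - 1. -/

import Mathlib

open Polynomial

section aux

variable {p r : ℕ} [Fact p.Prime]

lemma GF_pow_card (hr : 1 ≤ r) (x : GaloisField p r) : x ^ p ^ r = x := by
  have : Fintype (GaloisField p r) := Fintype.ofFinite _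
  have hcard : Fintype.card (GaloisField p r) = p ^ r := by
    rw [← Nat.card_eq_fintype_card, GaloisField.card p r (by omega)]
  rw [← hcard]; exact FiniteField.pow_card x

lemma key_dvd (p r d : ℕ) [Fact p.Prime] (hr : 1 ≤ r) (a : GaloisField p r) :
    ((∑ i ∈ Finset.range (d + 1), Polynomial.X ^ (p ^ r) ^ i) + Polynomial.C a)
      ∣ (Polynomial.X ^ (p ^ r) ^ (d + 1) - Polynomial.X :
          Polynomial (GaloisField p r)) := by
  set q := p ^ r with hq
  set T : Polynomial (GaloisField p r) := ∑ i ∈ Finset.range (d + 1), Polynomial.X ^ q ^ i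
    with hT
  have hchar : CharP (GaloisField p r) p := inferInstance
  -- step 1: (X - C (-a)) ∣ X^q - X
  have h1 : (X - C (-a)) ∣ (X ^ q - X : Polynomial (GaloisField p r)) := by
    rw [dvd_iff_isRoot]
    simp [IsRoot, hq, GF_pow_card hr]
  -- step 2: compose with T
  have h2 : (X - C (-a)).comp T ∣ ((X ^ q - X : Polynomial (GaloisField p r)).comp T) := by
    obtain ⟨k, hk⟩ := h1
    exact ⟨k.comp T, by rw [hk, mul_comp]⟩
  have e1 : (X - C (-a)).comp T = T + C a := by
    simp [sub_comp, sub_neg_eq_add]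
  have e2 : ((X ^ q - X : Polynomial (GaloisField p r)).comp T) = T ^ q - T := by
    simp [sub_comp, pow_comp]
  rw [e1, e2] at h2
  -- step 3: T ^ q - T = X ^ q ^ (d+1) - X
  have e3 : T ^ q - T = (X : Polynomial (GaloisField p r)) ^ q ^ (d + 1) - X := by
    have hTq : T ^ q = ∑ i ∈ Finset.range (d + 1),
        (X : Polynomial (GaloisField p r)) ^ q ^ (i + 1) := by
      rw [hT, hq, sum_pow_char_pow]
      apply Finset.sum_congr rfl
      intro i _
      rw [← pow_mul, ← pow_succ]
    have A := Finset.sum_range_succ' (fun i => (X : Polynomial (GaloisField p r)) ^ q ^ i) (d + 1)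
    have B := Finset.sum_range_succ (fun i => (X : Polynomial (GaloisField p r)) ^ q ^ i) (d + 1)
    simp only [pow_zero, pow_one] at A B
    rw [hTq, hT]
    linear_combination B - A
  rwa [e3] at h2

end aux

open Classical in
theorem stmt_9 (p r d : ℕ) [Fact p.Prime] (hr : 1 ≤ r) (hd : 1 ≤ d) (a : GaloisField p r) :
    (if a = 0 then
        (∑ i ∈ Finset.range (d + 1), Polynomial.X ^ ((p ^ r) ^ i - 1) :
          Polynomial (GaloisField p r))
      else
        (∑ i ∈ Finset.range (d + 1), Polynomial.X ^ (p ^ r) ^ i) + Polynomial.C a)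
      ∣ (Polynomial.X ^ ((p ^ r) ^ (d + 1) - 1) - 1 : Polynomial (GaloisField p r)) := by
  have hq1 : 1 ≤ p ^ r := Nat.one_le_pow _ _ (Nat.Prime.pos Fact.out)
  have hqd1 : 1 ≤ (p ^ r) ^ (d + 1) := Nat.one_le_pow _ _ (by omega)
  have hsplit : (Polynomial.X ^ (p ^ r) ^ (d + 1) - Polynomial.X :
      Polynomial (GaloisField p r)) =
      Polynomial.X * (Polynomial.X ^ ((p ^ r) ^ (d + 1) - 1) - 1) := by
    rw [mul_sub, mul_one, ← pow_succ']
    congr 1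
    congr 1
    omega
  have hX0 : (Polynomial.X : Polynomial (GaloisField p r)) ≠ 0 := Polynomial.X_ne_zero
  by_cases ha : a = 0
  · simp only [ha, if_pos rfl]
    have hXf : Polynomial.X * (∑ i ∈ Finset.range (d + 1),
        (Polynomial.X : Polynomial (GaloisField p r)) ^ ((p ^ r) ^ i - 1)) =
        ∑ i ∈ Finset.range (d + 1), Polynomial.X ^ (p ^ r) ^ i := by
      rw [Finset.mul_sum]
      apply Finset.sum_congr rfl
      intro i _
      rw [← pow_succ']
      congr 1
      have : 1 ≤ (p ^ r) ^ i := Nat.one_le_pow _ _ (by omega)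
      omega
    have h := key_dvd p r d hr (0 : GaloisField p r)
    rw [Polynomial.C_0, add_zero, ← hXf, hsplit] at h
    exact (mul_dvd_mul_iff_left hX0).mp h
  · simp only [if_neg ha]
    have h := key_dvd p r d hr a
    rw [hsplit] at h
    have hcop : IsCoprime ((∑ i ∈ Finset.range (d + 1),
        (Polynomial.X : Polynomial (GaloisField p r)) ^ (p ^ r) ^ i) + Polynomial.C a)
        (Polynomial.X : Polynomial (GaloisField p r)) := by
      apply IsCoprime.symm
      rw [Polynomial.irreducible_X.coprime_iff_not_dvd]
      intro hdvd
      obtain ⟨k, hk⟩ := hdvd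
      apply ha
      have := congrArg (Polynomial.eval 0) hk
      rw [Polynomial.eval_add, Polynomial.eval_C, Polynomial.eval_finset_sum,
        Polynomial.eval_mul, Polynomial.eval_X, zero_mul,
        Finset.sum_eq_zero (fun i _ => by
          rw [Polynomial.eval_pow, Polynomial.eval_X]
          exact zero_pow (pow_ne_zero _ (by omega)))] at this
      simpa using this
    exact hcop.dvd_of_dvd_mul_left h
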